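/- If u, v : ℝ² → ℝ are twice continuously differentiable, a ≠ 0 is a real constant, and (u+v)_x/2 = a·sin((u−v)/2) and (u−v)_t/2 = (1/a)·sin((u+v)/2) hold everywhere, then u satisfies the sine-Gordon equation u_xt = sin u. -/

import Mathlib

noncomputable def px (f : ℝ → ℝ → ℝ) (x t : ℝ) : ℝ :=
  deriv (fun x' => f x' t) x

noncomputable def pt (f : ℝ → ℝ → ℝ) (x t : ℝ) : ℝ :=
  deriv (fun t' => f x t') t

lemma key (f : ℝ → ℝ → ℝ) (hf : ContDiff ℝ 2 (Function.uncurry f)) :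
    ∃ S : ℝ → ℝ → ℝ,
      (∀ x t, HasDerivAt (fun x' => f x' t) (px f x t) x) ∧
      (∀ x t, HasDerivAt (fun t' => f x t') (pt f x t) t) ∧
      (∀ x t, HasDerivAt (fun t' => px f x t') (S x t) t) ∧
      (∀ x t, HasDerivAt (fun x' => pt f x' t) (S x t) x) ∧
      (∀ x t, pt (px f) x t = S x t) := by
  set F := Function.uncurry f with hF
  have hdF : Differentiable ℝ F := hf.differentiable (by norm_num)
  have hC1 : ContDiff ℝ 1 (fderiv ℝ F) := hf.fderiv_right (by norm_num)
  have hdF' : Differentiable ℝ (fderiv ℝ F) := hC1.differentiable one_ne_zero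
  have hx : ∀ x t, HasDerivAt (fun x' => f x' t) (fderiv ℝ F (x, t) (1, 0)) x := by
    intro x t
    exact (hdF (x, t)).hasFDerivAt.comp_hasDerivAt x
      (HasDerivAt.prodMk (hasDerivAt_id x) (hasDerivAt_const x t))
  have ht : ∀ x t, HasDerivAt (fun t' => f x t') (fderiv ℝ F (x, t) (0, 1)) t := by
    intro x t
    exact (hdF (x, t)).hasFDerivAt.comp_hasDerivAt t
      (HasDerivAt.prodMk (hasDerivAt_const t x) (hasDerivAt_id t))
  have hpx : ∀ x t, px f x t = fderiv ℝ F (x, t) (1, 0) := fun x t => (hx x t).deriv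
  have hpt : ∀ x t, pt f x t = fderiv ℝ F (x, t) (0, 1) := fun x t => (ht x t).deriv
  set Φ : ℝ × ℝ → (ℝ × ℝ) →L[ℝ] (ℝ × ℝ) →L[ℝ] ℝ := fun p => fderiv ℝ (fderiv ℝ F) p with hΦdef
  have hsymm : ∀ x t, Φ (x, t) (0, 1) (1, 0) = Φ (x, t) (1, 0) (0, 1) := by
    intro x t
    exact second_derivative_symmetric (fun y => (hdF y).hasFDerivAt)
      (hdF' (x, t)).hasFDerivAt _ _
  -- derivative of p ↦ fderiv F p w
  have hgw : ∀ (p : ℝ × ℝ) (w : ℝ × ℝ),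
      HasFDerivAt (fun q => fderiv ℝ F q w) ((Φ p).flip w) p := by
    intro p w
    have h := (hdF' p).hasFDerivAt.clm_apply (hasFDerivAt_const w p)
    have heq : (fderiv ℝ F p).comp (0 : (ℝ × ℝ) →L[ℝ] (ℝ × ℝ)) + (fderiv ℝ (fderiv ℝ F) p).flip w
        = (Φ p).flip w := by
      apply ContinuousLinearMap.ext; intro q
      simp [hΦdef]
    rwa [heq] at h
  refine ⟨fun x t => Φ (x, t) (0, 1) (1, 0), ?_, ?_, ?_, ?_, ?_⟩
  · intro x t; rw [hpx]; exact hx x t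
  · intro x t; rw [hpt]; exact ht x t
  · intro x t
    have h := (hgw (x, t) (1, 0)).comp_hasDerivAt t
      (HasDerivAt.prodMk (hasDerivAt_const t x) (hasDerivAt_id t))
    have heq : (fun t' => px f x t') = fun t' => fderiv ℝ F (x, t') (1, 0) := by
      funext t'; exact hpx x t'
    rw [heq]
    exact h
  · intro x t
    have h := (hgw (x, t) (0, 1)).comp_hasDerivAt x
      (HasDerivAt.prodMk (hasDerivAt_id x) (hasDerivAt_const x t))
    have heq : (fun x' => pt f x' t) = fun x' => fderiv ℝ F (x', t) (0, 1) := by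
      funext x'; exact hpt x' t
    show HasDerivAt (fun x' => pt f x' t) (Φ (x, t) (0, 1) (1, 0)) x
    rw [heq, hsymm]
    exact h
  · intro x t
    have h := (hgw (x, t) (1, 0)).comp_hasDerivAt t
      (HasDerivAt.prodMk (hasDerivAt_const t x) (hasDerivAt_id t))
    have heq : (fun t' => px f x t') = fun t' => fderiv ℝ F (x, t') (1, 0) := by
      funext t'; exact hpx x t'
    have h2 : HasDerivAt (fun t' => px f x t') (Φ (x, t) (0, 1) (1, 0)) t := by
      rw [heq]; exact h
    exact h2.deriv

theorem stmt_8 (a : ℝ) (ha : a ≠ 0) (u v : ℝ → ℝ → ℝ)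
    (hu : ContDiff ℝ 2 (Function.uncurry u))
    (hv : ContDiff ℝ 2 (Function.uncurry v))
    (hBT1 : ∀ x t, (px u x t + px v x t) / 2 = a * Real.sin ((u x t - v x t) / 2))
    (hBT2 : ∀ x t, (pt u x t - pt v x t) / 2 = (1 / a) * Real.sin ((u x t + v x t) / 2)) :
    ∀ x t, pt (px u) x t = Real.sin (u x t) := by
  obtain ⟨Su, hux, hut, huS, huS', huval⟩ := key u hu
  obtain ⟨Sv, hvx, hvt, hvS, hvS', hvval⟩ := key v hv
  intro x t
  set A := (u x t - v x t) / 2 with hA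
  set B := (u x t + v x t) / 2 with hB
  -- differentiate BT1 in t
  have hL1 : HasDerivAt (fun t' => (px u x t' + px v x t') / 2)
      ((Su x t + Sv x t) / 2) t := ((huS x t).add (hvS x t)).div_const 2
  have hinner1 : HasDerivAt (fun t' => (u x t' - v x t') / 2)
      ((pt u x t - pt v x t) / 2) t := ((hut x t).sub (hvt x t)).div_const 2
  have hR1 : HasDerivAt (fun t' => a * Real.sin ((u x t' - v x t') / 2))
      (a * (Real.cos A * ((pt u x t - pt v x t) / 2))) t := by
    exact ((Real.hasDerivAt_sin A).comp t hinner1).const_mul a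
  have hfun1 : (fun t' => (px u x t' + px v x t') / 2)
      = fun t' => a * Real.sin ((u x t' - v x t') / 2) := funext fun t' => hBT1 x t'
  have hE1 : (Su x t + Sv x t) / 2 = a * (Real.cos A * ((pt u x t - pt v x t) / 2)) := by
    have := hL1
    rw [hfun1] at this
    exact this.unique hR1
  -- differentiate BT2 in x
  have hL2 : HasDerivAt (fun x' => (pt u x' t - pt v x' t) / 2)
      ((Su x t - Sv x t) / 2) x := ((huS' x t).sub (hvS' x t)).div_const 2
  have hinner2 : HasDerivAt (fun x' => (u x' t + v x' t) / 2)
      ((px u x t + px v x t) / 2) x := ((hux x t).add (hvx x t)).div_const 2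
  have hR2 : HasDerivAt (fun x' => (1 / a) * Real.sin ((u x' t + v x' t) / 2))
      ((1 / a) * (Real.cos B * ((px u x t + px v x t) / 2))) x :=
    ((Real.hasDerivAt_sin B).comp x hinner2).const_mul (1 / a)
  have hfun2 : (fun x' => (pt u x' t - pt v x' t) / 2)
      = fun x' => (1 / a) * Real.sin ((u x' t + v x' t) / 2) := funext fun x' => hBT2 x' t
  have hE2 : (Su x t - Sv x t) / 2 = (1 / a) * (Real.cos B * ((px u x t + px v x t) / 2)) := by
    have := hL2
    rw [hfun2] at this
    exact this.unique hR2
  rw [hBT2 x t] at hE1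
  rw [hBT1 x t] at hE2
  have hsum : Su x t = Real.cos A * Real.sin B + Real.cos B * Real.sin A := by
    have e1 : (Su x t + Sv x t) / 2 = Real.cos A * Real.sin B := by
      rw [hE1]; field_simp; rfl
    have e2 : (Su x t - Sv x t) / 2 = Real.cos B * Real.sin A := by
      rw [hE2]; field_simp; try ring
    linarith
  have huAB : u x t = B + A := by rw [hA, hB]; ring
  rw [huval, hsum, huAB, Real.sin_add]
  try ring
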